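/- Let S be a closed oriented surface of genus g ≥ 2, let P be a maximal simplex of the curve complex C(S), and let H = ⟨T_a : a ∈ P⟩. Then the commensurator of H in Mod(S) equals Stab(P), the setwise stabilizer of P. -/

import Mathlib

open Pointwise

/-- Pairwise disjointness for a set of curves. -/
def PDisjS {V : Type*} (i : V → V → ℕ) (A : Set V) : Prop :=
  ∀ x ∈ A, ∀ y ∈ A, x ≠ y → i x y = 0

/-- A simplex of the curve complex. -/
def IsSimp {V : Type*} (i : V → V → ℕ) (s : Finset V) : Prop :=
  s.Nonempty ∧ PDisjS i ↑s

/-- A maximal simplex of the curve complex. -/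
def IsMaxC {V : Type*} (i : V → V → ℕ) (s : Finset V) : Prop :=
  IsSimp i s ∧ ∀ t : Finset V, IsSimp i t → s ⊆ t → s = t

/-- Abstract setting: `G = Mod(S)` acts on the curves `V`, `T` assigns Dehn twists,
twists conjugate via `T_{f(a)} = f T_a f⁻¹`, the action preserves intersection numbers,
twist subgroups of disjoint collections intersect in the twist subgroup of the
intersection, a finite-index subgroup of `H = ⟨T_a : a ∈ P⟩` generated by twists about a
subcollection must use all of `P` (since `H ≅ ℤ^{3g-3}`), and `H` has finite index in
`Stab(P)`. Then the commensurator of `H` in `G` equals the setwise stabilizer of the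
pants decomposition `P`. -/
theorem stmt16 {G V : Type*} [Group G] [MulAction G V]
    (g : ℕ) (hg : 2 ≤ g) (i : V → V → ℕ) (T : V → G)
    (hconj : ∀ (f : G) (a : V), T (f • a) = f * T a * f⁻¹)
    (hact : ∀ (f : G) (x y : V), i (f • x) (f • y) = i x y)
    (hmeet : ∀ A B : Set V, A.Finite → B.Finite → PDisjS i A → PDisjS i B →
      Subgroup.closure (T '' A) ⊓ Subgroup.closure (T '' B) =
        Subgroup.closure (T '' (A ∩ B)))
    (P : Finset V) (hP : IsMaxC i P) (hcard : P.card = 3 * g - 3)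
    (hrank : ∀ A : Set V, A ⊆ ↑P →
      (Subgroup.closure (T '' A)).relIndex (Subgroup.closure (T '' (↑P : Set V))) ≠ 0 →
      A = ↑P)
    (hfi : (Subgroup.closure (T '' (↑P : Set V))).relIndex
      (MulAction.stabilizer G (↑P : Set V)) ≠ 0) :
    Subgroup.Commensurable.commensurator (Subgroup.closure (T '' (↑P : Set V))) =
      MulAction.stabilizer G (↑P : Set V) := by
  classical
  set H := Subgroup.closure (T '' (↑P : Set V)) with hH
  -- conjugate of H is the twist group of the translated pants decomposition
  have hconjH : ∀ f : G, ConjAct.toConjAct f • H =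
      Subgroup.closure (T '' (f • (↑P : Set V))) := by
    intro f
    rw [hH, Subgroup.smul_closure]
    congr 1
    ext x
    simp only [Set.mem_smul_set, Set.mem_image]
    constructor
    · rintro ⟨y, ⟨a, ha, rfl⟩, rfl⟩
      exact ⟨f • a, ⟨a, ha, rfl⟩, by rw [hconj, ConjAct.toConjAct_smul]⟩
    · rintro ⟨y, ⟨a, ha, rfl⟩, rfl⟩
      exact ⟨T a, ⟨a, ha, rfl⟩, by rw [hconj, ConjAct.toConjAct_smul]⟩
  have hPd : PDisjS i (↑P : Set V) := hP.1.2
  have hsmulPd : ∀ f : G, PDisjS i (f • (↑P : Set V)) := by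
    rintro f x ⟨a, ha, rfl⟩ y ⟨b, hb, rfl⟩ hxy
    rw [hact]
    exact hPd a ha b hb (fun h => hxy (by rw [h]))
  have hfin : (↑P : Set V).Finite := P.finite_toSet
  have hsmulfin : ∀ f : G, (f • (↑P : Set V)).Finite := fun f => hfin.smul_set
  -- main step: a commensurating element satisfies P ⊆ f • P
  have key : ∀ f : G, f ∈ Subgroup.Commensurable.commensurator H → (↑P : Set V) ⊆ f • ↑P := by
    intro f hf
    rw [Subgroup.Commensurable.commensurator_mem_iff] at hf
    have h1 : ((ConjAct.toConjAct f • H) ⊓ H).relIndex H ≠ 0 := by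
      rw [Subgroup.inf_relIndex_right]
      exact hf.1
    rw [hconjH f, hmeet _ _ (hsmulfin f) hfin (hsmulPd f) hPd] at h1
    have := hrank ((f • (↑P : Set V)) ∩ ↑P) Set.inter_subset_right h1
    intro x hx
    rw [← this] at hx
    exact hx.1
  ext f
  rw [MulAction.mem_stabilizer_iff]
  constructor
  · intro hf
    have h1 := key f hf
    have h2 := key f⁻¹ (inv_mem hf)
    have h3 : f • (↑P : Set V) ⊆ ↑P := by
      have := Set.smul_set_mono (a := f) h2
      rwa [smul_inv_smul] at this
    exact le_antisymm h3 h1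
  · intro hf
    rw [Subgroup.Commensurable.commensurator_mem_iff, hconjH f, hf, ← hH]
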